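/- For every λ ∈ ℂ, det(λ·I_{(m+1)n} − C) = det((λ^{m+1} − λ^m)·I_n − ελ^m A − εB), where on the left the determinant is of an (m+1)n × (m+1)n complex matrix and on the right of an n×n complex matrix. Consequently, for λ ≠ 0, λ is an eigenvalue of C if and only if the n×n matrix (λ−1)λ^m I_n − ελ^m A − εB is singular. -/

import Mathlib

open Matrix

/-- The Euler companion matrix `C` of the forward Euler discretization
`z_{k+1} = z_k + ε A z_k + ε B z_{k-m}`, with step size `ε = 1/m`, written in
`(m+1) × (m+1)` blocks of size `n × n`: the first block row is
`(I + εA, 0, …, 0, εB)`, the subdiagonal blocks are `I`, all other blocks vanish. -/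
noncomputable def eulerC (n m : ℕ) (A B : Matrix (Fin n) (Fin n) ℝ) :
    Matrix (Fin (m+1) × Fin n) (Fin (m+1) × Fin n) ℝ :=
  fun ip jq =>
    if ip.1 = 0 then
      (if jq.1 = 0 then (if ip.2 = jq.2 then 1 else 0) + (1 / (m : ℝ)) * A ip.2 jq.2
       else if (jq.1 : ℕ) = m then (1 / (m : ℝ)) * B ip.2 jq.2 else 0)
    else if (jq.1 : ℕ) + 1 = (ip.1 : ℕ) then (if ip.2 = jq.2 then 1 else 0) else 0

namespace Stmt6Aux

open Equiv Finset

/-- Complex version of the Euler companion matrix. -/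
noncomputable def Cc (n m : ℕ) (A' B' : Matrix (Fin n) (Fin n) ℂ) :
    Matrix (Fin (m+1) × Fin n) (Fin (m+1) × Fin n) ℂ :=
  fun ip jq =>
    if ip.1 = 0 then
      (if jq.1 = 0 then (if ip.2 = jq.2 then 1 else 0) + (1 / (m : ℂ)) * A' ip.2 jq.2
       else if (jq.1 : ℕ) = m then (1 / (m : ℂ)) * B' ip.2 jq.2 else 0)
    else if (jq.1 : ℕ) + 1 = (ip.1 : ℕ) then (if ip.2 = jq.2 then 1 else 0) else 0

noncomputable def Xmat (n m : ℕ) (lam : ℂ) (A' : Matrix (Fin n) (Fin n) ℂ) :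
    Matrix (Fin n) (Fin n) ℂ :=
  lam • 1 - 1 - (1 / (m : ℂ)) • A'

noncomputable def Ymat (n m : ℕ) (lam : ℂ) (A' B' : Matrix (Fin n) (Fin n) ℂ) :
    Matrix (Fin n) (Fin n) ℂ :=
  lam ^ m • Xmat n m lam A' - (1 / (m : ℂ)) • B'

noncomputable def Umat (n m : ℕ) (lam : ℂ) :
    Matrix (Fin (m+1) × Fin n) (Fin (m+1) × Fin n) ℂ :=
  fun a b => (if a.1 ≤ b.1 then lam ^ ((b.1 : ℕ) - (a.1 : ℕ)) else 0) *
    (if a.2 = b.2 then 1 else 0)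

noncomputable def Vmat (n m : ℕ) (lam : ℂ) (A' : Matrix (Fin n) (Fin n) ℂ) :
    Matrix (Fin (m+1) × Fin n) (Fin (m+1) × Fin n) ℂ :=
  fun a b =>
    if a.1 = b.1 then (if a.2 = b.2 then 1 else 0)
    else if a.1 = 0 then lam ^ ((b.1 : ℕ) - 1) * Xmat n m lam A' a.2 b.2 else 0

noncomputable def MUmat (n m : ℕ) (lam : ℂ) (A' B' : Matrix (Fin n) (Fin n) ℂ) :
    Matrix (Fin (m+1) × Fin n) (Fin (m+1) × Fin n) ℂ :=
  fun a b =>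
    if a.1 = 0 then
      lam ^ (b.1 : ℕ) * Xmat n m lam A' a.2 b.2 -
        (if (b.1 : ℕ) = m then (1 / (m : ℂ)) * B' a.2 b.2 else 0)
    else if (b.1 : ℕ) + 1 = (a.1 : ℕ) then -(if a.2 = b.2 then (1:ℂ) else 0) else 0

noncomputable def Nmat (n m : ℕ) (lam : ℂ) (A' B' : Matrix (Fin n) (Fin n) ℂ) :
    Matrix (Fin (m+1) × Fin n) (Fin (m+1) × Fin n) ℂ :=
  fun a b =>
    if a.1 = 0 then (if (b.1 : ℕ) = m then Ymat n m lam A' B' a.2 b.2 else 0)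
    else if (b.1 : ℕ) + 1 = (a.1 : ℕ) then -(if a.2 = b.2 then (1:ℂ) else 0) else 0

variable {n m : ℕ}

lemma step1 (hm : 0 < m) (lam : ℂ) (A' B' : Matrix (Fin n) (Fin n) ℂ) :
    (lam • (1 : Matrix (Fin (m+1) × Fin n) (Fin (m+1) × Fin n) ℂ) - Cc n m A' B') *
      Umat n m lam = MUmat n m lam A' B' := by
  ext ⟨i, p⟩ ⟨j, q⟩
  set M := lam • (1 : Matrix (Fin (m+1) × Fin n) (Fin (m+1) × Fin n) ℂ) - Cc n m A' B' with hM
  have collapse : ∀ k : Fin (m+1),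
      (∑ r : Fin n, M (i, p) (k, r) * Umat n m lam (k, r) (j, q)) =
        (if k ≤ j then lam ^ ((j : ℕ) - (k : ℕ)) else 0) * M (i, p) (k, q) := by
    intro k
    have : ∀ r : Fin n, M (i, p) (k, r) * Umat n m lam (k, r) (j, q) =
        (if r = q then (if k ≤ j then lam ^ ((j : ℕ) - (k : ℕ)) else 0) * M (i, p) (k, r)
         else 0) := by
      intro r
      simp only [Umat]
      split_ifs <;> ring
    rw [Finset.sum_congr rfl fun r _ => this r, Finset.sum_ite_eq' Finset.univ q]
    simp
  rw [Matrix.mul_apply, Fintype.sum_prod_type,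
    Finset.sum_congr rfl fun k _ => collapse k]
  by_cases hi : i = 0
  · subst hi
    have Mval : ∀ k : Fin (m+1), M ((0 : Fin (m+1)), p) (k, q) =
        if k = 0 then Xmat n m lam A' p q
        else if (k : ℕ) = m then -((1 / (m : ℂ)) * B' p q) else 0 := by
      intro k
      simp only [hM, Matrix.sub_apply, Matrix.smul_apply, Matrix.one_apply, Cc, Xmat,
        Prod.mk.injEq, smul_eq_mul]
      by_cases hk : k = 0
      · subst hk
        simp [Matrix.sub_apply, Matrix.smul_apply, Matrix.one_apply, smul_eq_mul]
        split_ifs <;> ring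
      · have hk' : ¬ ((0 : Fin (m+1)) = k) := fun h => hk h.symm
        simp only [hk', false_and, if_false, if_neg hk', eq_comm] at *
        simp only [if_neg hk]
        split_ifs <;> ring
    have hsummand : ∀ k : Fin (m+1),
        (if k ≤ j then lam ^ ((j : ℕ) - (k : ℕ)) else 0) * M ((0 : Fin (m+1)), p) (k, q) =
          (if k = 0 then lam ^ (j : ℕ) * Xmat n m lam A' p q else 0) +
          (if k = Fin.last m then
              (if (j : ℕ) = m then -((1 / (m : ℂ)) * B' p q) else 0) else 0) := by
      intro k
      rw [Mval k]
      by_cases hk : k = 0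
      · subst hk
        have h1 : (0 : Fin (m+1)) ≤ j := Fin.zero_le j
        have h2 : (0 : Fin (m+1)) ≠ Fin.last m := by
          simp [Fin.ext_iff, Fin.val_last]; omega
        simp [h1, h2]
      · by_cases hk2 : (k : ℕ) = m
        · have hlast0 : Fin.last m ≠ 0 := by
            simp only [ne_eq, Fin.ext_iff, Fin.val_last, Fin.val_zero]; omega
          have hkl : k = Fin.last m := by
            simp only [Fin.ext_iff, Fin.val_last]; exact hk2
          subst hkl
          by_cases hj : (j : ℕ) = m
          · have hle : Fin.last m ≤ j := by rw [Fin.le_def]; simp [Fin.val_last]; omega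
            have hpow : (j : ℕ) - (Fin.last m : ℕ) = 0 := by
              simp [Fin.val_last]; omega
            simp [hlast0, hle, hpow, hj, Fin.val_last]
          · have hle : ¬ (Fin.last m ≤ j) := by
              rw [Fin.le_def]; simp [Fin.val_last]; have := j.isLt; omega
            simp [hlast0, hle, hj, Fin.val_last]
        · have hkl : k ≠ Fin.last m := by
            simp only [ne_eq, Fin.ext_iff, Fin.val_last]; exact hk2
          simp [hk, hk2, hkl]
    rw [Finset.sum_congr rfl fun k _ => hsummand k, Finset.sum_add_distrib,
      Finset.sum_ite_eq' Finset.univ (0 : Fin (m+1)),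
      Finset.sum_ite_eq' Finset.univ (Fin.last m)]
    have hj0 : (0 : Fin (m+1)) = 0 := rfl
    simp only [Finset.mem_univ, if_true, MUmat]
    split_ifs <;> ring
  · -- i ≠ 0
    have hipos : 0 < (i : ℕ) := by
      have : (i : ℕ) ≠ 0 := fun h => hi (by rw [Fin.ext_iff]; simpa using h)
      omega
    obtain ⟨i', hi'val⟩ : ∃ i' : Fin (m+1), (i' : ℕ) = (i : ℕ) - 1 :=
      ⟨⟨(i : ℕ) - 1, by have := i.isLt; omega⟩, rfl⟩
    have hii' : i ≠ i' := by simp only [ne_eq, Fin.ext_iff, hi'val]; omega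
    have hcond : ∀ k : Fin (m+1), ((k : ℕ) + 1 = (i : ℕ)) ↔ k = i' := by
      intro k
      rw [Fin.ext_iff, hi'val]
      omega
    have Mval : ∀ k : Fin (m+1), M (i, p) (k, q) =
        ((if k = i then lam else 0) - (if k = i' then 1 else 0)) *
          (if p = q then 1 else 0) := by
      intro k
      simp only [hM, Matrix.sub_apply, Matrix.smul_apply, Matrix.one_apply, Cc,
        Prod.mk.injEq, smul_eq_mul, if_neg hi, hcond k]
      rcases eq_or_ne k i with h1 | h1
      · subst h1
        have h2 : k ≠ i' := hii'
        simp only [if_neg h2, if_pos rfl, true_and]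
        split_ifs <;> ring
      · have h1' : i ≠ k := fun h => h1 h.symm
        simp only [if_neg h1, h1', false_and, if_false]
        rcases eq_or_ne k i' with h2 | h2
        · simp only [if_pos h2]; split_ifs <;> ring
        · simp only [if_neg h2]; ring
    have hsummand : ∀ k : Fin (m+1),
        (if k ≤ j then lam ^ ((j : ℕ) - (k : ℕ)) else 0) * M (i, p) (k, q) =
          (if k = i then (if i ≤ j then lam ^ ((j : ℕ) - (i : ℕ)) else 0) * lam *
              (if p = q then 1 else 0) else 0) +
          (if k = i' then -((if i' ≤ j then lam ^ ((j : ℕ) - ((i : ℕ) - 1)) else 0) *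
              (if p = q then 1 else 0)) else 0) := by
      intro k
      rw [Mval k]
      rcases eq_or_ne k i with h1 | h1
      · simp only [h1, if_pos rfl, if_neg hii', if_true]
        ring
      · rcases eq_or_ne k i' with h2 | h2
        · have hne : i' ≠ i := fun h => hii' h.symm
          simp only [h2, if_neg hne, if_pos rfl, hi'val, if_true]
          ring
        · simp only [if_neg h1, if_neg h2]
          ring
    rw [Finset.sum_congr rfl fun k _ => hsummand k, Finset.sum_add_distrib,
      Finset.sum_ite_eq' Finset.univ i, Finset.sum_ite_eq' Finset.univ i']
    simp only [Finset.mem_univ, if_true, MUmat, if_neg hi]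
    have hjlt := j.isLt
    have hilt := i.isLt
    by_cases hij : (j : ℕ) + 1 = (i : ℕ)
    · have h1 : ¬ (i ≤ j) := by rw [Fin.le_def]; omega
      have h2 : i' ≤ j := by rw [Fin.le_def, hi'val]; omega
      have h3 : (j : ℕ) - ((i : ℕ) - 1) = 0 := by omega
      simp [hij, h1, h2, h3]
    · by_cases hij2 : (i : ℕ) ≤ (j : ℕ)
      · have h1 : i ≤ j := by rw [Fin.le_def]; omega
        have h2 : i' ≤ j := by rw [Fin.le_def, hi'val]; omega
        have h3 : (j : ℕ) - ((i : ℕ) - 1) = ((j : ℕ) - (i : ℕ)) + 1 := by omega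
        simp only [hij, h1, h2, h3, if_true, if_false, pow_succ]
        ring
      · have h1 : ¬ (i ≤ j) := by rw [Fin.le_def]; omega
        have h2 : ¬ (i' ≤ j) := by rw [Fin.le_def, hi'val]; omega
        simp [hij, h1, h2]

lemma step2 (hm : 0 < m) (lam : ℂ) (A' B' : Matrix (Fin n) (Fin n) ℂ) :
    Vmat n m lam A' * MUmat n m lam A' B' = Nmat n m lam A' B' := by
  ext ⟨i, p⟩ ⟨j, q⟩
  rw [Matrix.mul_apply, Fintype.sum_prod_type]
  by_cases hi : i = 0
  · subst hi
    have hinner : ∀ k : Fin (m+1),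
        (∑ r : Fin n, Vmat n m lam A' ((0 : Fin (m+1)), p) (k, r) *
          MUmat n m lam A' B' (k, r) (j, q)) =
        (if k = 0 then MUmat n m lam A' B' ((0 : Fin (m+1)), p) (j, q) else 0) +
        (if k ≠ 0 ∧ (j : ℕ) + 1 = (k : ℕ) then -(lam ^ ((k : ℕ) - 1) * Xmat n m lam A' p q)
          else 0) := by
      intro k
      by_cases hk : k = 0
      · subst hk
        have : ∀ r : Fin n, Vmat n m lam A' ((0 : Fin (m+1)), p) ((0 : Fin (m+1)), r) *
            MUmat n m lam A' B' ((0 : Fin (m+1)), r) (j, q) =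
            if r = p then MUmat n m lam A' B' ((0 : Fin (m+1)), r) (j, q) else 0 := by
          intro r
          simp only [Vmat, if_pos rfl, eq_comm]
          split_ifs <;> simp_all
        rw [Finset.sum_congr rfl fun r _ => this r, Finset.sum_ite_eq' Finset.univ p]
        simp
      · have hVk : ∀ r : Fin n, Vmat n m lam A' ((0 : Fin (m+1)), p) (k, r) =
            lam ^ ((k : ℕ) - 1) * Xmat n m lam A' p r := by
          intro r
          simp only [Vmat]
          have : ¬ ((0 : Fin (m+1)) = k) := fun h => hk h.symm
          simp [this]
        have : ∀ r : Fin n, Vmat n m lam A' ((0 : Fin (m+1)), p) (k, r) *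
            MUmat n m lam A' B' (k, r) (j, q) =
            if r = q then (if (j : ℕ) + 1 = (k : ℕ) then
              -(lam ^ ((k : ℕ) - 1) * Xmat n m lam A' p r) else 0) else 0 := by
          intro r
          rw [hVk r]
          simp only [MUmat, if_neg hk]
          split_ifs <;> simp_all <;> ring
        rw [Finset.sum_congr rfl fun r _ => this r, Finset.sum_ite_eq' Finset.univ q]
        simp [hk]
    rw [Finset.sum_congr rfl fun k _ => hinner k, Finset.sum_add_distrib,
      Finset.sum_ite_eq' Finset.univ (0 : Fin (m+1))]
    simp only [Finset.mem_univ, if_true]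
    by_cases hj : (j : ℕ) = m
    · have hzero : ∀ k : Fin (m+1),
          (if k ≠ 0 ∧ (j : ℕ) + 1 = (k : ℕ) then
            -(lam ^ ((k : ℕ) - 1) * Xmat n m lam A' p q) else 0) = 0 := by
        intro k
        have := k.isLt
        have : ¬ (k ≠ 0 ∧ (j : ℕ) + 1 = (k : ℕ)) := by
          rintro ⟨h1, h2⟩; have := k.isLt; omega
        simp [this]
      rw [Finset.sum_congr rfl fun k _ => hzero k]
      simp [MUmat, Nmat, Ymat, hj, Matrix.sub_apply, Matrix.smul_apply, smul_eq_mul]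
    · set j' : Fin (m+1) := ⟨(j : ℕ) + 1, by have := j.isLt; omega⟩ with hj'
      have hcond : ∀ k : Fin (m+1), (k ≠ 0 ∧ (j : ℕ) + 1 = (k : ℕ)) ↔ k = j' := by
        intro k
        have h0 : ((k : Fin (m+1)) = 0) ↔ ((k : ℕ) = 0) := by
          rw [Fin.ext_iff, Fin.val_zero]
        have hj'k : (k = j') ↔ ((k : ℕ) = (j : ℕ) + 1) := by
          simp [Fin.ext_iff, hj']
        rw [hj'k, ne_eq, h0]
        omega
      have : ∀ k : Fin (m+1),
          (if k ≠ 0 ∧ (j : ℕ) + 1 = (k : ℕ) then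
            -(lam ^ ((k : ℕ) - 1) * Xmat n m lam A' p q) else 0) =
          (if k = j' then -(lam ^ (j : ℕ) * Xmat n m lam A' p q) else 0) := by
        intro k
        rw [if_congr (hcond k) rfl rfl]
        by_cases h : k = j'
        · subst h; simp [hj']
        · simp [h]
      rw [Finset.sum_congr rfl fun k _ => this k, Finset.sum_ite_eq' Finset.univ j']
      simp [MUmat, Nmat, hj]
  · have hinner : ∀ k : Fin (m+1),
        (∑ r : Fin n, Vmat n m lam A' (i, p) (k, r) * MUmat n m lam A' B' (k, r) (j, q)) =
        (if k = i then MUmat n m lam A' B' (i, p) (j, q) else 0) := by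
      intro k
      by_cases hk : k = i
      · subst hk
        have : ∀ r : Fin n, Vmat n m lam A' (k, p) (k, r) *
            MUmat n m lam A' B' (k, r) (j, q) =
            if r = p then MUmat n m lam A' B' (k, r) (j, q) else 0 := by
          intro r
          simp only [Vmat, if_pos rfl, eq_comm]
          split_ifs <;> simp_all
        rw [Finset.sum_congr rfl fun r _ => this r, Finset.sum_ite_eq' Finset.univ p]
        simp
      · have : ∀ r : Fin n, Vmat n m lam A' (i, p) (k, r) = 0 := by
          intro r
          simp only [Vmat]
          have h1 : ¬ ((i : Fin (m+1)) = k) := fun h => hk h.symm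
          simp [h1, hi]
        simp [this, hk]
    rw [Finset.sum_congr rfl fun k _ => hinner k, Finset.sum_ite_eq' Finset.univ i]
    simp [MUmat, Nmat, hi]

lemma det_Umat (lam : ℂ) : (Umat n m lam).det = 1 := by
  have hbt : (Umat n m lam).BlockTriangular Prod.fst := by
    intro a b hab
    simp only [Umat]
    rw [if_neg (not_le_of_gt hab), zero_mul]
  rw [hbt.det_fintype]
  apply Finset.prod_eq_one
  intro k _
  have h1 : (Umat n m lam).toSquareBlock Prod.fst k = 1 := by
    ext a b
    obtain ⟨⟨a1, a2⟩, ha⟩ := a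
    obtain ⟨⟨b1, b2⟩, hb⟩ := b
    have ha' : a1 = k := ha
    have hb' : b1 = k := hb
    simp [Matrix.toSquareBlock_def, Umat, Matrix.one_apply, Subtype.ext_iff,
      Prod.ext_iff, ha', hb']
  rw [h1, Matrix.det_one]

lemma det_Vmat (lam : ℂ) (A' : Matrix (Fin n) (Fin n) ℂ) :
    (Vmat n m lam A').det = 1 := by
  have hbt : (Vmat n m lam A').BlockTriangular Prod.fst := by
    intro a b hab
    simp only [Vmat]
    rw [if_neg hab.ne', if_neg]
    intro h; rw [h] at hab; exact (Fin.not_lt_zero _) hab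
  rw [hbt.det_fintype]
  apply Finset.prod_eq_one
  intro k _
  have h1 : (Vmat n m lam A').toSquareBlock Prod.fst k = 1 := by
    ext a b
    obtain ⟨⟨a1, a2⟩, ha⟩ := a
    obtain ⟨⟨b1, b2⟩, hb⟩ := b
    have ha' : a1 = k := ha
    have hb' : b1 = k := hb
    simp [Matrix.toSquareBlock_def, Vmat, Matrix.one_apply, Subtype.ext_iff,
      Prod.ext_iff, ha', hb']
  rw [h1, Matrix.det_one]

lemma det_Nmat (hm : 0 < m) (lam : ℂ) (A' B' : Matrix (Fin n) (Fin n) ℂ) :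
    (Nmat n m lam A' B').det = (Ymat n m lam A' B').det := by
  classical
  set blk : Fin (m+1) → Matrix (Fin n) (Fin n) ℂ :=
    fun i => if i = 0 then Ymat n m lam A' B' else -1 with hblk
  set σ : Equiv.Perm (Fin (m+1)) := finRotate (m+1) with hσ
  set e : Equiv.Perm (Fin (m+1) × Fin n) := Equiv.prodCongrLeft (fun _ : Fin n => σ) with he
  set pc : (Fin (m+1) × Fin n) ≃ (Fin n × Fin (m+1)) := Equiv.prodComm _ _ with hpc
  have hlast0 : Fin.last m ≠ 0 := by
    simp only [ne_eq, Fin.ext_iff, Fin.val_last, Fin.val_zero]; omega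
  have hσval : ∀ j : Fin (m+1), (σ j = 0 ↔ j = Fin.last m) ∧
      ∀ i : Fin (m+1), i ≠ 0 → (i = σ j ↔ (j : ℕ) + 1 = (i : ℕ)) := by
    intro j
    have hσj : σ j = j + 1 := by rw [hσ, finRotate_succ_apply]
    have hval : ((j + 1 : Fin (m+1)) : ℕ) = if j = Fin.last m then 0 else (j : ℕ) + 1 :=
      Fin.val_add_one j
    constructor
    · rw [hσj, Fin.ext_iff, hval, Fin.val_zero]
      by_cases hj : j = Fin.last m
      · simp [hj]
      · simp [hj]
    · intro i hi
      have hipos : 0 < (i : ℕ) := by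
        have : (i : ℕ) ≠ 0 := fun h => hi (by rw [Fin.ext_iff]; simpa using h)
        omega
      rw [hσj, Fin.ext_iff, hval]
      by_cases hj : j = Fin.last m
      · simp only [hj, if_true, Fin.val_last]
        have := i.isLt
        constructor
        · intro h; omega
        · intro h; omega
      · simp only [hj, if_false, Fin.ext_iff]
        omega
  have hsub : Nmat n m lam A' B' =
      ((blockDiagonal blk).submatrix pc pc).submatrix id e := by
    ext ⟨i, p⟩ ⟨j, q⟩
    have heapp : e (j, q) = (σ j, q) := rfl
    simp only [Matrix.submatrix_apply, heapp, id_eq, hpc, Equiv.prodComm_apply,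
      Prod.swap_prod_mk, Matrix.blockDiagonal_apply]
    by_cases hi : i = 0
    · subst hi
      simp only [Nmat, if_pos rfl, hblk]
      by_cases hj : (j : ℕ) = m
      · have hjl : j = Fin.last m := by
          simp only [Fin.ext_iff, Fin.val_last]; exact hj
        have : σ j = 0 := ((hσval j).1).mpr hjl
        simp [this, hj]
      · have hjl : j ≠ Fin.last m := by
          simp only [ne_eq, Fin.ext_iff, Fin.val_last]; exact hj
        have : σ j ≠ 0 := fun h => hjl (((hσval j).1).mp h)
        have h2 : ¬ ((0 : Fin (m+1)) = σ j) := fun h => this h.symm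
        simp [h2, hj]
    · have hctr := (hσval j).2 i hi
      simp only [Nmat, if_neg hi]
      by_cases hij : (j : ℕ) + 1 = (i : ℕ)
      · have h2 : i = σ j := hctr.mpr hij
        rw [if_pos hij, if_pos h2]
        simp [hblk, hi, Matrix.one_apply]
      · have h2 : ¬ (i = σ j) := fun h => hij (hctr.mp h)
        rw [if_neg hij, if_neg h2]
  have hsign : ((Equiv.Perm.sign e : ℤ) : ℂ) = ((-1 : ℂ) ^ m) ^ n := by
    rw [he, Equiv.Perm.sign_prodCongrLeft]
    simp [hσ, sign_finRotate]
  have hdetD : ((blockDiagonal blk).submatrix pc pc).det =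
      (Ymat n m lam A' B').det * ((-1 : ℂ) ^ n) ^ m := by
    rw [Matrix.det_submatrix_equiv_self, Matrix.det_blockDiagonal]
    rw [← Finset.mul_prod_erase Finset.univ _ (Finset.mem_univ (0 : Fin (m+1)))]
    have h0 : blk 0 = Ymat n m lam A' B' := by rw [hblk]; simp
    have hrest : ∀ i ∈ Finset.univ.erase (0 : Fin (m+1)), (blk i).det = (-1 : ℂ) ^ n := by
      intro i hi
      have hi0 : i ≠ 0 := (Finset.mem_erase.mp hi).1
      have : blk i = -1 := by rw [hblk]; simp [hi0]
      rw [this]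
      have : (-1 : Matrix (Fin n) (Fin n) ℂ) = -(1 : Matrix (Fin n) (Fin n) ℂ) := rfl
      rw [this, Matrix.det_neg, Matrix.det_one, Fintype.card_fin, mul_one]
    rw [Finset.prod_congr rfl hrest, Finset.prod_const, h0,
      Finset.card_erase_of_mem (Finset.mem_univ _), Finset.card_univ, Fintype.card_fin,
      Nat.add_sub_cancel]
  rw [hsub, Matrix.det_permute' e, hdetD, hsign]
  have : ((-1 : ℂ) ^ m) ^ n * ((-1 : ℂ) ^ n) ^ m = 1 := by
    rw [← pow_mul, ← pow_mul, Nat.mul_comm n m, ← pow_add]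
    exact Even.neg_one_pow ⟨m * n, by ring⟩
  calc ((-1 : ℂ) ^ m) ^ n * ((Ymat n m lam A' B').det * ((-1 : ℂ) ^ n) ^ m)
      = (((-1 : ℂ) ^ m) ^ n * ((-1 : ℂ) ^ n) ^ m) * (Ymat n m lam A' B').det := by ring
    _ = (Ymat n m lam A' B').det := by rw [this, one_mul]

lemma key (hm : 0 < m) (lam : ℂ) (A' B' : Matrix (Fin n) (Fin n) ℂ) :
    (lam • (1 : Matrix (Fin (m+1) × Fin n) (Fin (m+1) × Fin n) ℂ) - Cc n m A' B').det =
      (Ymat n m lam A' B').det := by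
  have h : Vmat n m lam A' * ((lam • (1 : Matrix (Fin (m+1) × Fin n) (Fin (m+1) × Fin n) ℂ)
      - Cc n m A' B') * Umat n m lam) = Nmat n m lam A' B' := by
    rw [step1 hm, step2 hm]
  have := congrArg Matrix.det h
  rw [Matrix.det_mul, Matrix.det_mul, det_Umat, det_Vmat, det_Nmat hm, mul_one, one_mul]
    at this
  exact this

end Stmt6Aux


theorem stmt_6 (n m : ℕ) (hn : 0 < n) (hm : 0 < m) (A B : Matrix (Fin n) (Fin n) ℝ) :
    (∀ lam : ℂ,
      Matrix.det (lam • (1 : Matrix (Fin (m+1) × Fin n) (Fin (m+1) × Fin n) ℂ)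
          - (eulerC n m A B).map Complex.ofReal) =
        Matrix.det ((lam ^ (m+1) - lam ^ m) • (1 : Matrix (Fin n) (Fin n) ℂ)
          - ((1 / (m : ℂ)) * lam ^ m) • A.map Complex.ofReal
          - (1 / (m : ℂ)) • B.map Complex.ofReal)) ∧
    (∀ lam : ℂ, lam ≠ 0 →
      (Matrix.det (lam • (1 : Matrix (Fin (m+1) × Fin n) (Fin (m+1) × Fin n) ℂ)
          - (eulerC n m A B).map Complex.ofReal) = 0 ↔
        Matrix.det (((lam - 1) * lam ^ m) • (1 : Matrix (Fin n) (Fin n) ℂ)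
          - ((1 / (m : ℂ)) * lam ^ m) • A.map Complex.ofReal
          - (1 / (m : ℂ)) • B.map Complex.ofReal) = 0)) := by
  have hC : (eulerC n m A B).map Complex.ofReal =
      Stmt6Aux.Cc n m (A.map Complex.ofReal) (B.map Complex.ofReal) := by
    ext ⟨i, p⟩ ⟨j, q⟩
    simp only [Matrix.map_apply, eulerC, Stmt6Aux.Cc]
    split_ifs <;> push_cast <;> ring
  have hY : ∀ lam : ℂ,
      Stmt6Aux.Ymat n m lam (A.map Complex.ofReal) (B.map Complex.ofReal) =
      (lam ^ (m+1) - lam ^ m) • (1 : Matrix (Fin n) (Fin n) ℂ)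
        - ((1 / (m : ℂ)) * lam ^ m) • A.map Complex.ofReal
        - (1 / (m : ℂ)) • B.map Complex.ofReal := by
    intro lam
    ext p q
    simp only [Stmt6Aux.Ymat, Stmt6Aux.Xmat, Matrix.sub_apply, Matrix.smul_apply,
      Matrix.one_apply, smul_eq_mul]
    split_ifs <;> ring
  have main : ∀ lam : ℂ,
      Matrix.det (lam • (1 : Matrix (Fin (m+1) × Fin n) (Fin (m+1) × Fin n) ℂ)
          - (eulerC n m A B).map Complex.ofReal) =
        Matrix.det ((lam ^ (m+1) - lam ^ m) • (1 : Matrix (Fin n) (Fin n) ℂ)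
          - ((1 / (m : ℂ)) * lam ^ m) • A.map Complex.ofReal
          - (1 / (m : ℂ)) • B.map Complex.ofReal) := by
    intro lam
    rw [hC, Stmt6Aux.key hm lam _ _, hY lam]
  refine ⟨main, fun lam _ => ?_⟩
  rw [main lam]
  have h : ((lam - 1) * lam ^ m) = lam ^ (m+1) - lam ^ m := by ring
  rw [h]
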